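/- Let X be a complex Banach space with dim X > 2, let 𝒩 be a non-trivial nest on X with dim X_-^⊥ > 1, let 𝒜 be a subalgebra of Alg 𝒩 satisfying (♠1)–(♠5), let n ≥ 2, and let L : 𝒜 → B(X) be a Lie n-derivation. Then for every x ∈ X, every f ∈ X_-^⊥(𝒜)∖{0}, and every y ∈ X with f(y) = 1, there exists φ ∈ X* with φ(y) = 0 such that L(x⊗f) = ((L(x⊗f) − h(x,f)I)y) ⊗ f + x ⊗ φ + h(x,f)I. -/

import Mathlib

open scoped Classical

set_option synthInstance.maxHeartbeats 1000000
set_option maxHeartbeats 1000000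

noncomputable section

/-- The `(n-1)`-th commutator polynomial `p_n(x_1, …, x_n)`, defined recursively by
`p_1(x_1) = x_1` and `p_k(x_1, …, x_k) = [p_{k-1}(x_1, …, x_{k-1}), x_k]`. -/
def commPoly {A : Type*} [NonUnitalNonAssocRing A] : (n : ℕ) → (Fin n → A) → A
  | 0, _ => 0
  | 1, a => a 0
  | n + 2, a =>
      commPoly (n + 1) (fun i => a i.castSucc) * a (Fin.last (n + 1)) -
        a (Fin.last (n + 1)) * commPoly (n + 1) (fun i => a i.castSucc)

/-- A nest of closed subspaces of `X`: it contains `{0}` and `X`, is totally ordered by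
inclusion, is closed under arbitrary intersections, and contains the norm-closed linear
span of the union of any subfamily. -/
structure IsNest {X : Type*} [NormedAddCommGroup X] [NormedSpace ℂ X]
    (𝒩 : Set (Submodule ℂ X)) : Prop where
  closed : ∀ N ∈ 𝒩, IsClosed (N : Set X)
  bot_mem : (⊥ : Submodule ℂ X) ∈ 𝒩
  top_mem : (⊤ : Submodule ℂ X) ∈ 𝒩
  total : ∀ N₁ ∈ 𝒩, ∀ N₂ ∈ 𝒩, N₁ ≤ N₂ ∨ N₂ ≤ N₁
  sInf_mem : ∀ S ⊆ 𝒩, sInf S ∈ 𝒩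
  closure_sSup_mem : ∀ S ⊆ 𝒩, (sSup S).topologicalClosure ∈ 𝒩

/-- The nest algebra `Alg 𝒩` of all bounded operators leaving every member of `𝒩`
invariant. -/
def nestAlgebra {X : Type*} [NormedAddCommGroup X] [NormedSpace ℂ X]
    (𝒩 : Set (Submodule ℂ X)) : Subalgebra ℂ (X →L[ℂ] X) where
  carrier := {T : X →L[ℂ] X | ∀ N ∈ 𝒩, ∀ x ∈ N, T x ∈ N}
  mul_mem' := fun {a b} ha hb N hN x hx => ha N hN _ (hb N hN x hx)
  one_mem' := fun N _ x hx => hx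
  add_mem' := fun {a b} ha hb N hN x hx => N.add_mem (ha N hN x hx) (hb N hN x hx)
  zero_mem' := fun N _ _ _ => N.zero_mem
  algebraMap_mem' := fun r N hN x hx => by
    simpa [Algebra.algebraMap_eq_smul_one] using N.smul_mem r hx

/-- `X₋` : the norm-closed linear span of the union of all members of `𝒩` different
from `X`. -/
def nestXminus {X : Type*} [NormedAddCommGroup X] [NormedSpace ℂ X]
    (𝒩 : Set (Submodule ℂ X)) : Submodule ℂ X :=
  (sSup {N | N ∈ 𝒩 ∧ N ≠ (⊤ : Submodule ℂ X)}).topologicalClosure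

/-- The annihilator of a subspace `S` of `X` inside the continuous dual `X*`. -/
def annihilatorOf {X : Type*} [NormedAddCommGroup X] [NormedSpace ℂ X]
    (S : Submodule ℂ X) : Submodule ℂ (X →L[ℂ] ℂ) where
  carrier := {f | ∀ x ∈ S, f x = 0}
  add_mem' := fun {f g} hf hg x hx => by simp [hf x hx, hg x hx]
  zero_mem' := fun x _ => by simp
  smul_mem' := fun c f hf x hx => by simp [hf x hx]

/-- `X(𝒜)` : the set of `x ∈ X` such that `x ⊗ f ∈ 𝒜` for some nonzero `f ∈ X*`.
Here `x ⊗ f` is the rank-one operator `y ↦ f(y) x`, i.e. `f.smulRight x`. -/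
def XofA {X : Type*} [NormedAddCommGroup X] [NormedSpace ℂ X]
    (𝒜 : NonUnitalSubalgebra ℂ (X →L[ℂ] X)) : Set X :=
  {x | ∃ f : X →L[ℂ] ℂ, f ≠ 0 ∧ f.smulRight x ∈ 𝒜}

/-- `X₋^⊥(𝒜)` : the set of `f ∈ X₋^⊥` such that `x ⊗ f ∈ 𝒜` for some nonzero
`x ∈ X`. -/
def XannA {X : Type*} [NormedAddCommGroup X] [NormedSpace ℂ X]
    (𝒩 : Set (Submodule ℂ X)) (𝒜 : NonUnitalSubalgebra ℂ (X →L[ℂ] X)) :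
    Set (X →L[ℂ] ℂ) :=
  {f | (∀ x ∈ nestXminus 𝒩, f x = 0) ∧ ∃ x : X, x ≠ 0 ∧ f.smulRight x ∈ 𝒜}

/-- `L` is a Lie `n`-derivation from the (not necessarily unital) subalgebra `𝒜` of
`B(X)` into `B(X)`. -/
def IsLieNDerivNU {X : Type*} [NormedAddCommGroup X] [NormedSpace ℂ X]
    (𝒜 : NonUnitalSubalgebra ℂ (X →L[ℂ] X)) (n : ℕ)
    (L : ↥𝒜 →ₗ[ℂ] (X →L[ℂ] X)) : Prop :=
  ∀ a : Fin n → ↥𝒜,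
    L (commPoly n a) =
      ∑ k : Fin n,
        commPoly n (Function.update (fun i => ((a i : X →L[ℂ] X))) k (L (a k)))

/-- The scalar `h(x, f)` attached to a Lie-type derivation `L`: it is `0` when
`f(x) = 0`, and `f(L(x ⊗ f) x) / f(x)` otherwise. -/
def hAux {X : Type*} [NormedAddCommGroup X] [NormedSpace ℂ X]
    (𝒜 : NonUnitalSubalgebra ℂ (X →L[ℂ] X)) (L : ↥𝒜 →ₗ[ℂ] (X →L[ℂ] X))
    (x : X) (f : X →L[ℂ] ℂ) : ℂ :=
  if f x = 0 then 0
  else if hm : f.smulRight x ∈ 𝒜 then f ((L ⟨f.smulRight x, hm⟩) x) / f x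
  else 0

section AuxCommPoly

variable {R : Type*} [NonUnitalNonAssocRing R]

lemma commPoly_two (a : Fin 2 → R) : commPoly 2 a = a 0 * a 1 - a 1 * a 0 := rfl

lemma commPoly_succ_succ (n : ℕ) (a : Fin (n+2) → R) :
    commPoly (n+2) a = commPoly (n+1) (fun i => a i.castSucc) * a (Fin.last (n+1)) -
      a (Fin.last (n+1)) * commPoly (n+1) (fun i => a i.castSucc) := rfl

lemma commPoly_tail_one (e : R) :
    ∀ (m : ℕ) (a : Fin (m+2) → R), (∀ i : Fin (m+2), 1 ≤ (i : ℕ) → a i = e) →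
      commPoly (m+2) a = (fun S => S * e - e * S)^[m+1] (a 0)
  | 0, a, h => by
    show commPoly 2 a = _
    rw [commPoly_two, h 1 (by norm_num), Function.iterate_one]
  | m+1, a, h => by
    have IH : commPoly (m+1+1) (fun i => a i.castSucc)
        = (fun S => S * e - e * S)^[m+1] ((fun i : Fin (m+2) => a i.castSucc) 0) :=
      commPoly_tail_one e m (fun i => a i.castSucc)
        (fun i hi => h i.castSucc (by simpa using hi))
    have hz : (fun i : Fin (m+2) => a i.castSucc) 0 = a 0 := by simp
    rw [commPoly_succ_succ, IH, hz, h (Fin.last (m+2)) (by simp)]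
    conv_rhs => rw [Function.iterate_succ_apply']

lemma commPoly_tail_two (e : R) :
    ∀ (m : ℕ) (a : Fin (m+2) → R), (∀ i : Fin (m+2), 2 ≤ (i : ℕ) → a i = e) →
      commPoly (m+2) a = (fun S => S * e - e * S)^[m] (a 0 * a 1 - a 1 * a 0)
  | 0, a, h => by
    show commPoly 2 a = _
    rw [commPoly_two, Function.iterate_zero]
    rfl
  | m+1, a, h => by
    have IH : commPoly (m+1+1) (fun i => a i.castSucc)
        = (fun S => S * e - e * S)^[m]
          ((fun i : Fin (m+2) => a i.castSucc) 0 * (fun i : Fin (m+2) => a i.castSucc) 1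
            - (fun i : Fin (m+2) => a i.castSucc) 1 * (fun i : Fin (m+2) => a i.castSucc) 0) :=
      commPoly_tail_two e m (fun i => a i.castSucc)
        (fun i hi => h i.castSucc (by simpa using hi))
    have hz : (fun i : Fin (m+2) => a i.castSucc) 0 = a 0 := by simp
    have ho : (fun i : Fin (m+2) => a i.castSucc) 1 = a 1 := by simp
    rw [commPoly_succ_succ, IH, hz, ho, h (Fin.last (m+2)) (by simp)]
    conv_rhs => rw [Function.iterate_succ_apply']

lemma commPoly_mid_one (e : R) :
    ∀ (m : ℕ) (a : Fin (m+2) → R) (k : ℕ) (hk : k < m+2), 1 ≤ k →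
      (∀ i : Fin (m+2), 1 ≤ (i : ℕ) → (i : ℕ) ≠ k → a i = e) →
      (a 0 * e - e * a 0 = a 0) →
      commPoly (m+2) a
        = (fun S => S * e - e * S)^[m+1-k] (a 0 * a ⟨k, hk⟩ - a ⟨k, hk⟩ * a 0)
  | 0, a, k, hk, hk1, h, hfix => by
    have hk' : k = 1 := by omega
    subst hk'
    show commPoly 2 a = _
    rw [commPoly_two]
    rw [show (0:ℕ)+1-1 = 0 from rfl, Function.iterate_zero]
    have : (⟨1, hk⟩ : Fin 2) = 1 := rfl
    rw [this]
    rfl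
  | m+1, a, k, hk, hk1, h, hfix => by
    rcases Nat.lt_succ_iff_lt_or_eq.mp hk with hk2 | hk2
    · have IH : commPoly (m+1+1) (fun i => a i.castSucc)
          = (fun S => S * e - e * S)^[m+1-k]
            ((fun i : Fin (m+2) => a i.castSucc) 0 * (fun i : Fin (m+2) => a i.castSucc) ⟨k, hk2⟩
              - (fun i : Fin (m+2) => a i.castSucc) ⟨k, hk2⟩
                  * (fun i : Fin (m+2) => a i.castSucc) 0) :=
        commPoly_mid_one e m (fun i => a i.castSucc) k hk2 hk1
          (fun i hi hik => h i.castSucc (by simpa using hi) (by simpa using hik))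
          (by simpa using hfix)
      have hz : (fun i : Fin (m+2) => a i.castSucc) 0 = a 0 := by simp
      have hkk : (fun i : Fin (m+2) => a i.castSucc) ⟨k, hk2⟩ = a ⟨k, hk⟩ := by
        simp [Fin.castSucc_mk]
      have hlaste : a (Fin.last (m+2)) = e := h _ (by simp) (by simp only [Fin.val_last]; omega)
      rw [commPoly_succ_succ, IH, hz, hkk, hlaste, show m+1+1-k = (m+1-k)+1 by omega]
      conv_rhs => rw [Function.iterate_succ_apply']
    · subst hk2
      have IH : commPoly (m+1+1) (fun i => a i.castSucc)
          = (fun S => S * e - e * S)^[m+1] ((fun i : Fin (m+2) => a i.castSucc) 0) :=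
        commPoly_tail_one e m (fun i => a i.castSucc)
          (fun i hi => h i.castSucc (by simpa using hi)
            (by have := i.isLt; simp only [Fin.coe_castSucc]; omega))
      have hz : (fun i : Fin (m+2) => a i.castSucc) 0 = a 0 := by simp
      have hfixpt : (fun S => S * e - e * S)^[m+1] (a 0) = a 0 :=
        Function.iterate_fixed (f := fun S => S * e - e * S) (x := a 0) hfix (m+1)
      have hlast : (Fin.last (m+2)) = (⟨m+2, hk⟩ : Fin (m+3)) := rfl
      rw [commPoly_succ_succ, IH, hz, hfixpt, show m+1+1-(m+2) = 0 by omega,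
        Function.iterate_zero, hlast]
      rfl

lemma commPoly_mid_two (e : R) :
    ∀ (m : ℕ) (a : Fin (m+2) → R) (k : ℕ) (hk : k < m+2), 2 ≤ k →
      (∀ i : Fin (m+2), 2 ≤ (i : ℕ) → (i : ℕ) ≠ k → a i = e) →
      ((a 0 * a 1 - a 1 * a 0) * e - e * (a 0 * a 1 - a 1 * a 0) = a 0 * a 1 - a 1 * a 0) →
      commPoly (m+2) a
        = (fun S => S * e - e * S)^[m+1-k]
            ((a 0 * a 1 - a 1 * a 0) * a ⟨k, hk⟩ - a ⟨k, hk⟩ * (a 0 * a 1 - a 1 * a 0))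
  | 0, a, k, hk, hk2, h, hfix => by omega
  | m+1, a, k, hk, hk2, h, hfix => by
    rcases Nat.lt_succ_iff_lt_or_eq.mp hk with hk3 | hk3
    · have IH := commPoly_mid_two e m (fun i => a i.castSucc) k hk3 hk2
        (fun i hi hik => h i.castSucc (by simpa using hi) (by simpa using hik))
        (by simpa using hfix)
      have hz : (fun i : Fin (m+2) => a i.castSucc) 0 = a 0 := by simp
      have ho : (fun i : Fin (m+2) => a i.castSucc) 1 = a 1 := by simp
      have hkk : (fun i : Fin (m+2) => a i.castSucc) ⟨k, hk3⟩ = a ⟨k, hk⟩ := by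
        simp [Fin.castSucc_mk]
      rw [show a (Fin.castSucc 0) = a 0 from hz, show a (Fin.castSucc 1) = a 1 from ho,
        show a (Fin.castSucc ⟨k, hk3⟩) = a ⟨k, hk⟩ from hkk] at IH
      have hlaste : a (Fin.last (m+2)) = e :=
        h _ (by simp only [Fin.val_last]; omega) (by simp only [Fin.val_last]; omega)
      rw [commPoly_succ_succ, IH, hlaste, show m+1+1-k = (m+1-k)+1 by omega]
      conv_rhs => rw [Function.iterate_succ_apply']
    · subst hk3
      have IH := commPoly_tail_two e m (fun i => a i.castSucc)
          (fun i hi => h i.castSucc (by simpa using hi)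
            (by have := i.isLt; simp only [Fin.coe_castSucc]; omega))
      have hz : (fun i : Fin (m+2) => a i.castSucc) 0 = a 0 := by simp
      have ho : (fun i : Fin (m+2) => a i.castSucc) 1 = a 1 := by simp
      rw [show a (Fin.castSucc 0) = a 0 from hz, show a (Fin.castSucc 1) = a 1 from ho] at IH
      have hfixpt : (fun S => S * e - e * S)^[m] (a 0 * a 1 - a 1 * a 0)
          = a 0 * a 1 - a 1 * a 0 :=
        Function.iterate_fixed (f := fun S => S * e - e * S) (x := a 0 * a 1 - a 1 * a 0) hfix m
      have hlast : (Fin.last (m+2)) = (⟨m+2, hk⟩ : Fin (m+3)) := rfl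
      rw [commPoly_succ_succ, IH, hfixpt, show m+1+1-(m+2) = 0 by omega,
        Function.iterate_zero, hlast]
      rfl

end AuxCommPoly

section AuxCoe

variable {X : Type*} [NormedAddCommGroup X] [NormedSpace ℂ X]

lemma commPoly_coe (𝒜 : NonUnitalSubalgebra ℂ (X →L[ℂ] X)) :
    ∀ (n : ℕ) (a : Fin n → ↥𝒜),
      ((commPoly n a : ↥𝒜) : X →L[ℂ] X) = commPoly n (fun i => (a i : X →L[ℂ] X))
  | 0, a => by simp [commPoly]
  | 1, a => rfl
  | n+2, a => by
    rw [commPoly_succ_succ, commPoly_succ_succ]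
    push_cast [commPoly_coe 𝒜 (n+1)]
    rfl

lemma iterD_apply_ker (f : X →L[ℂ] ℂ) (y : X) (hy : f y = 1) (z : X) (hz : f z = 0) :
    ∀ (j : ℕ) (S : X →L[ℂ] X),
      ((fun S => S * (f.smulRight y) - (f.smulRight y) * S)^[j+1] S) z
        = ((-1:ℂ)^(j+1) * f (S z)) • y
  | 0, S => by
    simp [ContinuousLinearMap.mul_apply, hz]
  | j+1, S => by
    rw [Function.iterate_succ_apply']
    have IH := iterD_apply_ker f y hy z hz j S
    simp only [ContinuousLinearMap.sub_apply, ContinuousLinearMap.mul_apply, IH,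
      ContinuousLinearMap.smulRight_apply, hz, zero_smul, map_smul, map_zero, smul_smul,
      smul_eq_mul, hy, mul_one, zero_sub, ← neg_smul]
    congr 1
    ring

lemma iterD_apply_one (f : X →L[ℂ] ℂ) (y : X) (hy : f y = 1) :
    ∀ (j : ℕ) (S : X →L[ℂ] X),
      ((fun S => S * (f.smulRight y) - (f.smulRight y) * S)^[j+1] S) y
        = S y - f (S y) • y
  | 0, S => by
    simp [ContinuousLinearMap.mul_apply, hy]
  | j+1, S => by
    rw [Function.iterate_succ_apply']
    have IH := iterD_apply_one f y hy j S
    simp only [ContinuousLinearMap.sub_apply, ContinuousLinearMap.mul_apply, IH,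
      ContinuousLinearMap.smulRight_apply, hy, one_smul, map_sub, map_smul, smul_sub,
      smul_eq_mul, mul_one, smul_smul]
    abel

end AuxCoe

/-- (Lemma 3.7 of the paper.)  For every `x ∈ X`, every nonzero
`f ∈ X₋^⊥(𝒜)`, and every `y` with `f(y) = 1`, there is `φ ∈ X*` with `φ(y) = 0` such
that `L(x ⊗ f) = ((L(x ⊗ f) - h(x,f) I) y) ⊗ f + x ⊗ φ + h(x,f) I`. -/
theorem statement9 {X : Type*} [NormedAddCommGroup X] [NormedSpace ℂ X] [CompleteSpace X]
    (hdim : 2 < Module.rank ℂ X)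
    (𝒩 : Set (Submodule ℂ X)) (hnest : IsNest 𝒩)
    (hnontrivial : 𝒩 ≠ ({⊥, ⊤} : Set (Submodule ℂ X)))
    (hdimann : 1 < Module.rank ℂ ↥(annihilatorOf (nestXminus 𝒩)))
    (𝒜 : NonUnitalSubalgebra ℂ (X →L[ℂ] X))
    (h𝒜 : ∀ T ∈ 𝒜, T ∈ nestAlgebra 𝒩)
    -- (♠1) : `X₋^⊥(𝒜) ≠ {0}` and `X₋^⊥(𝒜)` is a linear subspace of `X*`
    (hS1 : XannA 𝒩 𝒜 ≠ ({0} : Set (X →L[ℂ] ℂ)) ∧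
      ∃ p : Submodule ℂ (X →L[ℂ] ℂ), (p : Set (X →L[ℂ] ℂ)) = XannA 𝒩 𝒜)
    -- (♠2) : for each `f ∈ X₋^⊥(𝒜)` there exists `y ∈ X \ X₋` with `y ⊗ f ∈ 𝒜`
    (hS2 : ∀ f ∈ XannA 𝒩 𝒜, ∃ y : X, y ∉ nestXminus 𝒩 ∧ f.smulRight y ∈ 𝒜)
    -- (♠3) : `x ⊗ f ∈ 𝒜` for every `x ∈ X(𝒜)` and `f ∈ X₋^⊥(𝒜)`
    (hS3 : ∀ x ∈ XofA 𝒜, ∀ f ∈ XannA 𝒩 𝒜, f.smulRight x ∈ 𝒜)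
    -- (♠4) : `dim(X(𝒜) ∩ ker fᵢ) > 1` and `X(𝒜) ∩ ker f₁ ∩ ker f₂ ≠ {0}`
    (hS4 : ∀ f₁ ∈ XannA 𝒩 𝒜, ∀ f₂ ∈ XannA 𝒩 𝒜,
      (∃ u v : X, u ∈ XofA 𝒜 ∧ f₁ u = 0 ∧ v ∈ XofA 𝒜 ∧ f₁ v = 0 ∧
        LinearIndependent ℂ ![u, v]) ∧
      (∃ u v : X, u ∈ XofA 𝒜 ∧ f₂ u = 0 ∧ v ∈ XofA 𝒜 ∧ f₂ v = 0 ∧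
        LinearIndependent ℂ ![u, v]) ∧
      (∃ z : X, z ≠ 0 ∧ z ∈ XofA 𝒜 ∧ f₁ z = 0 ∧ f₂ z = 0))
    -- (♠5) : `X(𝒜) = X`
    (hS5 : XofA 𝒜 = Set.univ)
    (n : ℕ) (hn : 2 ≤ n)
    (L : ↥𝒜 →ₗ[ℂ] (X →L[ℂ] X)) (hL : IsLieNDerivNU 𝒜 n L) :
    ∀ x : X, ∀ f ∈ XannA 𝒩 𝒜, f ≠ 0 → ∀ y : X, f y = 1 →
      ∀ (hm : f.smulRight x ∈ 𝒜),
      ∃ φ : X →L[ℂ] ℂ, φ y = 0 ∧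
        L ⟨f.smulRight x, hm⟩ =
          f.smulRight ((L ⟨f.smulRight x, hm⟩) y - hAux 𝒜 L x f • y) +
            φ.smulRight x + hAux 𝒜 L x f • (1 : X →L[ℂ] X) := by
  intro x f hf hf0 y hy hm
  obtain ⟨m, rfl⟩ : ∃ m : ℕ, n = m + 2 := ⟨n - 2, by omega⟩
  have hXall : ∀ u : X, u ∈ XofA 𝒜 := fun u => hS5 ▸ Set.mem_univ u
  have memA : ∀ u : X, (f.smulRight u) ∈ 𝒜 := fun u => hS3 u (hXall u) f hf
  set T : X → (X →L[ℂ] X) := fun u => L ⟨f.smulRight u, memA u⟩ with hTdef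
  -- linearity in the "vector" subscript
  have hTadd : ∀ u v : X, T (u + v) = T u + T v := by
    intro u v
    show L _ = L _ + L _
    rw [show (⟨f.smulRight (u + v), memA _⟩ : ↥𝒜)
      = ⟨f.smulRight u, memA u⟩ + ⟨f.smulRight v, memA v⟩ from
      Subtype.ext (by ext w; simp [smul_add]), map_add]
  have hTsmul : ∀ (c : ℂ) (u : X), T (c • u) = c • T u := by
    intro c u
    show L _ = c • L _
    rw [show (⟨f.smulRight (c • u), memA _⟩ : ↥𝒜) = c • ⟨f.smulRight u, memA u⟩ from
      Subtype.ext (by ext w; simp [smul_smul, mul_comm]), map_smul]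
  -- products of rank-one operators
  have hEmul : ∀ y' u : X, f y' = 1 →
      (f.smulRight u) * (f.smulRight y') = f.smulRight u := by
    intro y' u h1
    ext w
    simp [ContinuousLinearMap.mul_apply, h1, smul_smul, mul_comm]
  have hEmul' : ∀ y' u : X,
      (f.smulRight y') * (f.smulRight u) = f u • f.smulRight y' := by
    intro y' u
    ext w
    simp [ContinuousLinearMap.mul_apply, smul_smul, mul_comm]
  -- ===== identity (B) =====
  have hB : ∀ y' : X, f y' = 1 → ∀ u z : X, f u = 0 → f z = 0 →
      T u z = ((-1 : ℂ) ^ (m + 1) * f (T u z)) • y' + f (T y' z) • u := by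
    intro y' hy1 u z hu hz
    set s : Fin (m+2) → ↥𝒜 :=
      fun i => if i = 0 then ⟨f.smulRight u, memA u⟩ else ⟨f.smulRight y', memA y'⟩ with hs
    have hcoe : (fun i => ((s i : X →L[ℂ] X)))
        = fun i : Fin (m+2) => if i = 0 then f.smulRight u else f.smulRight y' := by
      funext i
      by_cases h0 : i = 0 <;> simp [hs, h0]
    have hfix : (f.smulRight u) * (f.smulRight y') - (f.smulRight y') * (f.smulRight u)
        = f.smulRight u := by
      rw [hEmul y' u hy1, hEmul' y' u, hu, zero_smul, sub_zero]
    have hbase : commPoly (m+2) s = ⟨f.smulRight u, memA u⟩ := by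
      apply Subtype.ext
      rw [commPoly_coe, hcoe, commPoly_tail_one (f.smulRight y') m _ ?hyp]
      case hyp =>
        intro i hi
        rw [if_neg (by intro h; rw [h] at hi; simp at hi)]
      show (fun S => S * (f.smulRight y') - (f.smulRight y') * S)^[m+1]
          (if (0 : Fin (m+2)) = 0 then f.smulRight u else f.smulRight y') = _
      rw [if_pos rfl]
      exact Function.iterate_fixed
        (f := fun S => S * (f.smulRight y') - (f.smulRight y') * S)
        (x := f.smulRight u) hfix (m+1)
    have key := hL s
    rw [hbase] at key
    have hterm : ∀ k : Fin (m+2),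
        (commPoly (m+2) (Function.update (fun i => ((s i : X →L[ℂ] X))) k (L (s k)))) z
          = if k = 0 then ((-1 : ℂ) ^ (m + 1) * f (T u z)) • y'
            else if (k : ℕ) = m + 1 then f (T y' z) • u else 0 := by
      intro k
      rw [hcoe]
      by_cases hk0 : k = 0
      · subst hk0
        have hs0 : s 0 = ⟨f.smulRight u, memA u⟩ := by simp [hs]
        rw [hs0]
        have hop : commPoly (m+2)
            (Function.update (fun i : Fin (m+2) => if i = 0 then f.smulRight u
              else f.smulRight y') 0 (L ⟨f.smulRight u, memA u⟩))
            = (fun S => S * (f.smulRight y') - (f.smulRight y') * S)^[m+1] (T u) := by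
          rw [commPoly_tail_one (f.smulRight y') m _ ?hyp2]
          · rw [Function.update_self]
          case hyp2 =>
            intro i hi
            have hne : i ≠ 0 := by intro h; rw [h] at hi; simp at hi
            rw [Function.update_of_ne hne, if_neg hne]
        rw [hop, iterD_apply_ker f y' hy1 z hz m (T u), if_pos rfl]
      · have hsk : s k = ⟨f.smulRight y', memA y'⟩ := by simp [hs, hk0]
        rw [hsk]
        have hk1 : 1 ≤ (k : ℕ) :=
          Nat.one_le_iff_ne_zero.mpr (fun h => hk0 (Fin.ext (by simp [h])))
        have hupd0 : (Function.update (fun i : Fin (m+2) => if i = 0 then f.smulRight u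
            else f.smulRight y') k (L ⟨f.smulRight y', memA y'⟩)) 0 = f.smulRight u := by
          rw [Function.update_of_ne (Ne.symm hk0), if_pos rfl]
        have hupdk : (Function.update (fun i : Fin (m+2) => if i = 0 then f.smulRight u
            else f.smulRight y') k (L ⟨f.smulRight y', memA y'⟩)) ⟨(k : ℕ), k.isLt⟩
            = T y' := by
          rw [Fin.eta, Function.update_self]
        have hop : commPoly (m+2)
            (Function.update (fun i : Fin (m+2) => if i = 0 then f.smulRight u
              else f.smulRight y') k (L ⟨f.smulRight y', memA y'⟩))
            = (fun S => S * (f.smulRight y') - (f.smulRight y') * S)^[m+1-(k:ℕ)]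
                ((f.smulRight u) * (T y') - (T y') * (f.smulRight u)) := by
          rw [commPoly_mid_one (f.smulRight y') m _ (k : ℕ) k.isLt hk1 ?hyp3 ?hyp4,
            hupd0, hupdk]
          case hyp3 =>
            intro i hi hik
            have hne : i ≠ k := fun h => hik (by rw [h])
            have hne0 : i ≠ 0 := by intro h; rw [h] at hi; simp at hi
            rw [Function.update_of_ne hne, if_neg hne0]
          case hyp4 =>
            rw [hupd0, hfix]
        by_cases hklast : (k : ℕ) = m + 1
        · rw [hop, hklast, show m+1-(m+1) = 0 from by omega, Function.iterate_zero, id_eq,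
            if_neg hk0, if_pos rfl]
          simp [ContinuousLinearMap.mul_apply, hz]
        · rw [hop, show m+1-(k:ℕ) = (m-(k:ℕ))+1 from by omega,
            iterD_apply_ker f y' hy1 z hz (m-(k:ℕ)) _, if_neg hk0, if_neg hklast]
          have hNz : f ((((f.smulRight u) * (T y')) - ((T y') * (f.smulRight u))) z) = 0 := by
            simp [ContinuousLinearMap.mul_apply, hz, hu]
          rw [hNz, mul_zero, zero_smul]
    have keyz : T u z = ∑ k : Fin (m+2),
        (commPoly (m+2) (Function.update (fun i => ((s i : X →L[ℂ] X))) k (L (s k)))) z := by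
      conv_lhs => rw [show T u = L ⟨f.smulRight u, memA u⟩ from rfl, key]
      rw [ContinuousLinearMap.sum_apply]
    rw [Finset.sum_congr rfl (fun k _ => hterm k)] at keyz
    have hsum : (∑ k : Fin (m+2), if k = 0 then ((-1 : ℂ) ^ (m + 1) * f (T u z)) • y'
          else if (k : ℕ) = m + 1 then f (T y' z) • u else 0)
        = ((-1 : ℂ) ^ (m + 1) * f (T u z)) • y' + f (T y' z) • u := by
      rw [Fin.sum_univ_succ, Fin.sum_univ_castSucc]
      have hmid : ∀ j : Fin m,
          (if (j.castSucc.succ : Fin (m+2)) = 0 then ((-1 : ℂ) ^ (m + 1) * f (T u z)) • y'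
            else if ((j.castSucc.succ : Fin (m+2)) : ℕ) = m + 1 then f (T y' z) • u else 0)
          = 0 := by
        intro j
        rw [if_neg (Fin.succ_ne_zero _), if_neg ?_]
        have := j.isLt
        simp only [Fin.val_succ, Fin.coe_castSucc]
        omega
      rw [Finset.sum_congr rfl (fun j _ => hmid j), Finset.sum_const, smul_zero,
        if_pos rfl, if_neg (Fin.succ_ne_zero _),
        if_pos (by simp only [Fin.val_succ, Fin.val_last])]
      rw [zero_add]
    rw [hsum] at keyz
    exact keyz
  -- ===== existence of an independent vector in ker f =====
  have hker2 : ∀ u : X, ∃ w : X, f w = 0 ∧ w ∉ Submodule.span ℂ {u} := by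
    intro u
    by_contra hcon
    push_neg at hcon
    have hspan : (⊤ : Submodule ℂ X) ≤ Submodule.span ℂ ({y, u} : Set X) := by
      intro w _
      have h1 : w - f w • y ∈ Submodule.span ℂ {u} :=
        hcon _ (by rw [map_sub, map_smul, hy, smul_eq_mul, mul_one, sub_self])
      have h2 : w = f w • y + (w - f w • y) := by abel
      rw [h2]
      refine Submodule.add_mem _ ?_ ?_
      · exact Submodule.smul_mem _ _ (Submodule.subset_span (by simp))
      · exact Submodule.span_mono (by simp) h1
    have h3 : Module.rank ℂ X ≤ 2 := by
      calc Module.rank ℂ X = Module.rank ℂ (⊤ : Submodule ℂ X) := (rank_top ℂ X).symm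
        _ ≤ Module.rank ℂ (Submodule.span ℂ ({y, u} : Set X)) := Submodule.rank_mono hspan
        _ ≤ Cardinal.mk (({y, u}) : Set X) := rank_span_le ({y, u} : Set X)
        _ ≤ Cardinal.mk (({u}) : Set X) + 1 := Cardinal.mk_insert_le
        _ = 1 + 1 := by rw [Cardinal.mk_singleton]
        _ = 2 := one_add_one_eq_two
    exact absurd hdim (not_lt.mpr h3)
  -- ===== (C) : f (T u z) = 0 on ker f × ker f =====
  have hC : ∀ u z : X, f u = 0 → f z = 0 → f (T u z) = 0 := by
    intro u z hu hz
    obtain ⟨w, hw0, hwspan⟩ := hker2 u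
    have e1 := hB y hy u z hu hz
    have hyw : f (y + w) = 1 := by rw [map_add, hy, hw0, add_zero]
    have e2 := hB (y + w) hyw u z hu hz
    rw [hTadd y w] at e2
    rw [ContinuousLinearMap.add_apply, map_add] at e2
    have e3 : ((-1 : ℂ) ^ (m + 1) * f (T u z)) • w + f (T w z) • u = 0 := by
      have h5 : ((-1 : ℂ) ^ (m + 1) * f (T u z)) • w + f (T w z) • u
          = (((-1 : ℂ) ^ (m + 1) * f (T u z)) • (y + w) + (f (T y z) + f (T w z)) • u)
            - (((-1 : ℂ) ^ (m + 1) * f (T u z)) • y + f (T y z) • u) := by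
        module
      rw [h5, ← e2, ← e1, sub_self]
    by_contra hfz
    have hA : ((-1 : ℂ) ^ (m + 1) * f (T u z)) ≠ 0 :=
      mul_ne_zero (pow_ne_zero _ (by norm_num)) hfz
    have hw' : w = (-(((-1 : ℂ) ^ (m + 1) * f (T u z))⁻¹ * f (T w z))) • u := by
      have h6 := congrArg (fun v => ((-1 : ℂ) ^ (m + 1) * f (T u z))⁻¹ • v) e3
      simp only [smul_add, smul_smul, inv_mul_cancel₀ hA, one_smul, smul_zero] at h6
      rw [neg_smul]
      exact eq_neg_of_add_eq_zero_left h6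
    exact hwspan (Submodule.mem_span_singleton.mpr ⟨_, hw'.symm⟩)
  -- ===== (D) =====
  have hD : ∀ u z : X, f u = 0 → f z = 0 → T u z = f (T y z) • u := by
    intro u z hu hz
    have := hB y hy u z hu hz
    rw [hC u z hu hz, mul_zero, zero_smul, zero_add] at this
    exact this

  -- ===== the second master identity: structure of T y on ker f =====
  have hG : ∀ u : X, f u = 0 →
      f (T u y) = - f (T y u) ∧ T y u = f (T y y) • u + f (T y u) • y := by
    intro u hu
    have h01 : (0 : Fin (m+2)) ≠ 1 := by
      intro h
      have h' := congrArg Fin.val h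
      simp [Fin.val_one] at h'
    set s : Fin (m+2) → ↥𝒜 :=
      fun i => if i = 1 then ⟨f.smulRight u, memA u⟩ else ⟨f.smulRight y, memA y⟩ with hs
    have hcoe : (fun i => ((s i : X →L[ℂ] X)))
        = fun i : Fin (m+2) => if i = 1 then f.smulRight u else f.smulRight y := by
      funext i
      by_cases h1 : i = 1 <;> simp [hs, h1]
    have hc : (f.smulRight y) * (f.smulRight u) - (f.smulRight u) * (f.smulRight y)
        = -(f.smulRight u) := by
      rw [hEmul y u hy, hEmul' y u, hu, zero_smul, zero_sub]
    have hfixneg : (-(f.smulRight u)) * (f.smulRight y)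
        - (f.smulRight y) * (-(f.smulRight u)) = -(f.smulRight u) := by
      rw [neg_mul, mul_neg, sub_neg_eq_add, hEmul y u hy, hEmul' y u, hu, zero_smul, add_zero]
    have hbase : commPoly (m+2) s = -(⟨f.smulRight u, memA u⟩ : ↥𝒜) := by
      apply Subtype.ext
      rw [commPoly_coe, hcoe, commPoly_tail_two (f.smulRight y) m _ ?hyp]
      case hyp =>
        intro i hi
        rw [if_neg (by intro h; rw [h] at hi; simp [Fin.val_one] at hi)]
      simp only [if_neg h01, eq_self_iff_true, if_true]
      rw [hc, Function.iterate_fixed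
        (f := fun S => S * (f.smulRight y) - (f.smulRight y) * S)
        (x := -(f.smulRight u)) hfixneg m]
      simp
    have key := hL s
    rw [hbase, map_neg] at key
    set gg : Fin (m+2) → (X →L[ℂ] X) := fun k =>
      if k = 0 then (fun S => S * (f.smulRight y) - (f.smulRight y) * S)^[m]
          ((T y) * (f.smulRight u) - (f.smulRight u) * (T y))
      else if k = 1 then (fun S => S * (f.smulRight y) - (f.smulRight y) * S)^[m]
          ((f.smulRight y) * (T u) - (T u) * (f.smulRight y))
      else (fun S => S * (f.smulRight y) - (f.smulRight y) * S)^[m+1-(k:ℕ)]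
          ((T y) * (f.smulRight u) - (f.smulRight u) * (T y)) with hgg
    have hterm : ∀ k : Fin (m+2),
        commPoly (m+2) (Function.update (fun i => ((s i : X →L[ℂ] X))) k (L (s k)))
          = gg k := by
      intro k
      rw [hcoe]
      by_cases hk0 : k = 0
      · subst hk0
        have hs0 : s 0 = ⟨f.smulRight y, memA y⟩ := by simp [hs, h01]
        rw [hs0]
        simp only [hgg, eq_self_iff_true, if_true]
        rw [commPoly_tail_two (f.smulRight y) m _ ?hyp2]
        case hyp2 =>
          intro i hi
          have hne0 : i ≠ 0 := by intro h; rw [h] at hi; simp at hi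
          have hne1 : i ≠ 1 := by intro h; rw [h] at hi; simp [Fin.val_one] at hi
          rw [Function.update_of_ne hne0, if_neg hne1]
        rw [Function.update_self, Function.update_of_ne (Ne.symm h01), if_pos rfl]
      · by_cases hk1 : k = 1
        · subst hk1
          have hs1 : s 1 = ⟨f.smulRight u, memA u⟩ := by simp [hs]
          rw [hs1]
          simp only [hgg, if_neg (Ne.symm h01), eq_self_iff_true, if_true]
          rw [commPoly_tail_two (f.smulRight y) m _ ?hyp2]
          case hyp2 =>
            intro i hi
            have hne1 : i ≠ 1 := by intro h; rw [h] at hi; simp [Fin.val_one] at hi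
            rw [Function.update_of_ne hne1, if_neg hne1]
          rw [Function.update_self, Function.update_of_ne h01, if_neg h01]
        · have hsk : s k = ⟨f.smulRight y, memA y⟩ := by simp [hs, hk1]
          rw [hsk]
          simp only [hgg, if_neg hk0, if_neg hk1]
          have hkval1 : (k : ℕ) ≠ 0 := fun h => hk0 (Fin.ext (by simp [h]))
          have hkval2 : (k : ℕ) ≠ 1 := fun h => hk1 (Fin.ext (by simp [h, Fin.val_one]))
          have hk2 : 2 ≤ (k : ℕ) := by omega
          have hupd0 : (Function.update (fun i : Fin (m+2) => if i = 1 then f.smulRight u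
              else f.smulRight y) k (L ⟨f.smulRight y, memA y⟩)) 0 = f.smulRight y := by
            rw [Function.update_of_ne (Ne.symm hk0), if_neg h01]
          have hupd1 : (Function.update (fun i : Fin (m+2) => if i = 1 then f.smulRight u
              else f.smulRight y) k (L ⟨f.smulRight y, memA y⟩)) 1 = f.smulRight u := by
            rw [Function.update_of_ne (Ne.symm hk1), if_pos rfl]
          have hupdk : (Function.update (fun i : Fin (m+2) => if i = 1 then f.smulRight u
              else f.smulRight y) k (L ⟨f.smulRight y, memA y⟩)) ⟨(k : ℕ), k.isLt⟩
              = T y := by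
            rw [Fin.eta, Function.update_self]
          rw [commPoly_mid_two (f.smulRight y) m _ (k : ℕ) k.isLt hk2 ?hyp3 ?hyp4]
          case hyp3 =>
            intro i hi hik
            have hne : i ≠ k := fun h => hik (by rw [h])
            have hne1 : i ≠ 1 := by intro h; rw [h] at hi; simp [Fin.val_one] at hi
            rw [Function.update_of_ne hne, if_neg hne1]
          case hyp4 =>
            rw [hupd0, hupd1, hc, hfixneg]
          rw [hupd0, hupd1, hupdk, hc]
          congr 1
          noncomm_ring
    have keyy : -(T u y) = ∑ k : Fin (m+2), (gg k) y := by
      have h9 := congrArg (fun S : X →L[ℂ] X => S y) key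
      simp only [ContinuousLinearMap.neg_apply, ContinuousLinearMap.sum_apply] at h9
      rw [h9]
      exact Finset.sum_congr rfl (fun k _ => by rw [hterm k])
    -- values at y
    have hM0y : (((T y) * (f.smulRight u) - (f.smulRight u) * (T y))) y
        = T y u - f (T y y) • u := by
      simp [ContinuousLinearMap.mul_apply, hy]
    have hfM0y : f (T y u - f (T y y) • u) = f (T y u) := by
      rw [map_sub, map_smul]
      simp [hu]
    have hM1y : (((f.smulRight y) * (T u) - (T u) * (f.smulRight y))) y
        = f (T u y) • y - T u y := by
      simp [ContinuousLinearMap.mul_apply, hy]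
    have hfM1y : f (f (T u y) • y - T u y) = 0 := by
      rw [map_sub, map_smul]
      simp [hy, smul_eq_mul]
    -- the uniform consequence
    have keyI : (((m : ℕ) : ℂ) + 1) • (T y u - f (T y y) • u) + f (T u y) • y
        = ((m : ℕ) : ℂ) • (f (T y u) • y) := by
      rcases Nat.eq_zero_or_pos m with hm0 | hmpos
      · subst hm0
        rw [Fin.sum_univ_two] at keyy
        have hg0 : gg 0 y = T y u - f (T y y) • u := by
          simp only [hgg, eq_self_iff_true, if_true]
          rw [Function.iterate_zero, id_eq, hM0y]
        have hg1 : gg 1 y = f (T u y) • y - T u y := by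
          simp only [hgg, if_neg (Ne.symm h01), eq_self_iff_true, if_true]
          rw [Function.iterate_zero, id_eq, hM1y]
        rw [hg0, hg1] at keyy
        push_cast
        linear_combination (norm := module) (-1 : ℂ) • keyy
      · obtain ⟨m', rfl⟩ : ∃ m', m = m' + 1 := ⟨m - 1, by omega⟩
        rw [Fin.sum_univ_succ, Fin.sum_univ_succ, Fin.sum_univ_castSucc] at keyy
        have hg0 : gg 0 y = (T y u - f (T y y) • u) - f (T y u) • y := by
          simp only [hgg, eq_self_iff_true, if_true]
          rw [iterD_apply_one f y hy m' _, hM0y, hfM0y]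
        have hg1 : gg ((0 : Fin (m'+2)).succ) y = f (T u y) • y - T u y := by
          rw [Fin.succ_zero_eq_one]
          simp only [hgg, if_neg (Ne.symm h01), eq_self_iff_true, if_true]
          rw [iterD_apply_one f y hy m' _, hM1y, hfM1y, zero_smul, sub_zero]
        have hmid : ∀ i : Fin m', gg ((i.castSucc.succ).succ) y
            = (T y u - f (T y y) • u) - f (T y u) • y := by
          intro i
          have hk0 : ((i.castSucc.succ).succ : Fin (m'+3)) ≠ 0 := Fin.succ_ne_zero _
          have hk1 : ((i.castSucc.succ).succ : Fin (m'+3)) ≠ 1 := by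
            intro h
            have h' := congrArg Fin.val h
            simp [Fin.val_succ, Fin.val_one] at h'
          simp only [hgg, if_neg hk0, if_neg hk1]
          have hv : (((i.castSucc.succ).succ : Fin (m'+3)) : ℕ) = (i : ℕ) + 2 := by
            simp [Fin.val_succ]
          rw [hv, show m'+1+1-((i:ℕ)+2) = (m'-(i:ℕ)-1)+1 from by omega,
            iterD_apply_one f y hy (m'-(i:ℕ)-1) _, hM0y, hfM0y]
        have hlast : gg (((Fin.last m').succ).succ) y = T y u - f (T y y) • u := by
          have hk0 : (((Fin.last m').succ).succ : Fin (m'+3)) ≠ 0 := Fin.succ_ne_zero _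
          have hk1 : (((Fin.last m').succ).succ : Fin (m'+3)) ≠ 1 := by
            intro h
            have h' := congrArg Fin.val h
            simp [Fin.val_succ, Fin.val_last, Fin.val_one] at h'
          simp only [hgg, if_neg hk0, if_neg hk1]
          have hv : ((((Fin.last m').succ).succ : Fin (m'+3)) : ℕ) = m' + 2 := by
            simp [Fin.val_succ, Fin.val_last]
          rw [hv, show m'+1+1-(m'+2) = 0 from by omega, Function.iterate_zero, id_eq, hM0y]
        rw [hg0, hg1, Finset.sum_congr rfl (fun i _ => hmid i), Finset.sum_const,
          Finset.card_univ, Fintype.card_fin, hlast] at keyy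
        rw [← Nat.cast_smul_eq_nsmul ℂ] at keyy
        push_cast
        linear_combination (norm := module) (-1 : ℂ) • keyy
    have hμ : f (T u y) = - f (T y u) := by
      have h6 := congrArg f keyI
      simp only [map_add, map_smul, map_sub, hy, hu, smul_eq_mul, mul_one, mul_zero,
        sub_zero] at h6
      linear_combination h6
    refine ⟨hμ, ?_⟩
    have hne : ((m : ℕ) : ℂ) + 1 ≠ 0 := by
      have : (((m : ℕ) : ℂ) + 1) = (((m+1 : ℕ) : ℕ) : ℂ) := by push_cast; ring
      rw [this]
      exact_mod_cast Nat.succ_ne_zero m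
    have h7 : (((m : ℕ) : ℂ) + 1) • (T y u - (f (T y y) • u + f (T y u) • y)) = 0 := by
      have h8 : (((m : ℕ) : ℂ) + 1) • (T y u - (f (T y y) • u + f (T y u) • y))
          = ((((m : ℕ) : ℂ) + 1) • (T y u - f (T y y) • u) + f (T u y) • y)
            - ((m : ℕ) : ℂ) • (f (T y u) • y) := by
        rw [hμ]
        module
      rw [h8, keyI, sub_self]
    rcases smul_eq_zero.mp h7 with h9 | h9
    · exact absurd h9 hne
    · exact sub_eq_zero.mp h9

  -- ===== final assembly =====
  have hu0 : f (x - f x • y) = 0 := by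
    rw [map_sub, map_smul, hy, smul_eq_mul, mul_one, sub_self]
  have hsplitTx : T x = f x • T y + T (x - f x • y) := by
    rw [← hTsmul, ← hTadd]
    congr 1
    abel
  have hTxz : ∀ z : X, f z = 0 → T x z = (f x * f (T y y)) • z + f (T y z) • x := by
    intro z hz
    have h1 : T x z = f x • T y z + T (x - f x • y) z := by
      rw [hsplitTx, ContinuousLinearMap.add_apply, ContinuousLinearMap.smul_apply]
    conv_lhs => rw [h1, (hG z hz).2, hD (x - f x • y) z hu0 hz]
    module
  have hTxy : f (T x y) = f x * f (T y y) - f (T y (x - f x • y)) := by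
    rw [hsplitTx, ContinuousLinearMap.add_apply, ContinuousLinearMap.smul_apply, map_add,
      map_smul, (hG (x - f x • y) hu0).1, smul_eq_mul]
    ring
  have hfTxx : f (T x x) = f x * f x * f (T y y) := by
    have hx : T x x = f x • T x y + T x (x - f x • y) := by
      have h1 : f x • T x y + T x (x - f x • y) = T x (f x • y + (x - f x • y)) := by
        rw [map_add, map_smul]
      rw [h1]
      congr 1
      abel
    rw [hx, map_add, map_smul, hTxz _ hu0, hTxy]
    simp only [map_add, map_smul, smul_eq_mul, hu0, mul_zero, zero_add]
    ring
  have hh : hAux 𝒜 L x f = f x * f (T y y) := by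
    by_cases hfx : f x = 0
    · simp only [hAux, hfx, eq_self_iff_true, if_true, zero_mul]
    · simp only [hAux, if_neg hfx, dif_pos hm]
      have he : f ((L ⟨f.smulRight x, hm⟩) x) = f x * f x * f (T y y) := hfTxx
      rw [he]
      field_simp
  refine ⟨f.comp (T y) - f (T y y) • f, ?_, ?_⟩
  · simp only [ContinuousLinearMap.sub_apply, ContinuousLinearMap.coe_comp',
      Function.comp_apply, ContinuousLinearMap.smul_apply, smul_eq_mul, hy, mul_one, sub_self]
  · rw [hh]
    have hLx : (L ⟨f.smulRight x, hm⟩) = T x := rfl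
    rw [hLx]
    ext z
    have hz0 : f (z - f z • y) = 0 := by
      rw [map_sub, map_smul, hy, smul_eq_mul, mul_one, sub_self]
    have hL1 : T x z = f z • T x y + T x (z - f z • y) := by
      have h1 : f z • T x y + T x (z - f z • y) = T x (f z • y + (z - f z • y)) := by
        rw [map_add, map_smul]
      rw [h1]
      congr 1
      abel
    have hTy_z : f (T y (z - f z • y)) = f (T y z) - f z * f (T y y) := by
      rw [map_sub, map_smul, map_sub, map_smul, smul_eq_mul]
    simp only [ContinuousLinearMap.add_apply, ContinuousLinearMap.smulRight_apply,
      ContinuousLinearMap.smul_apply, ContinuousLinearMap.one_apply,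
      ContinuousLinearMap.sub_apply, ContinuousLinearMap.coe_comp', Function.comp_apply,
      smul_eq_mul]
    rw [hL1, hTxz _ hz0, hTy_z]
    module
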